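/- arXiv:2601.14920 — 2 statements merged into one kernel-verified Lean document; each statement's English description precedes it below -/
import Mathlib

section
/- Let k be a perfect field of characteristic p, K = Frac(k[[t_1,...,t_n]]), and T a new indeterminate. Extend the Frobenius F to K((T)) by F(T) = T^p. Then for any f ∈ k[[t_1,...,t_n]], the family (t^r (f+T)^s) indexed by (r,s) ∈ {0,...,p-1}^{n+1} is a basis of K((T)) as a vector space over K((T))^{<p>} = F(K((T))). -/
set_option synthInstance.maxHeartbeats 1000000

open scoped Classical

/-- The Frobenius on multivariate power series: `Σ a_i t^i ↦ Σ a_i^p t^{p·i}`. -/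
noncomputable def frobMv {n : ℕ} {k : Type*} [CommSemiring k] (p : ℕ)
    (g : MvPowerSeries (Fin n) k) : MvPowerSeries (Fin n) k :=
  fun i => if ∀ j, p ∣ i j then
    (MvPowerSeries.coeff (Finsupp.mapRange (· / p) (Nat.zero_div p) i) g) ^ p else 0

set_option maxHeartbeats 2000000
set_option linter.unusedSectionVars false


open Finsupp in
theorem mvpoly_coeff_pow_char {σ R : Type*} [CommRing R] (p : ℕ) [hp : Fact p.Prime] [CharP R p]
    (Q : MvPolynomial σ R) (i : σ →₀ ℕ) :
    (Q ^ p).coeff i = if ∀ j, p ∣ i j then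
      (Q.coeff (Finsupp.mapRange (· / p) (Nat.zero_div p) i)) ^ p else 0 := by
  classical
  have hQ : Q ^ p = ∑ d ∈ Q.support, MvPolynomial.monomial (p • d) (Q.coeff d ^ p) := by
    conv_lhs => rw [Q.as_sum]
    rw [sum_pow_char]
    congr 1
    ext d
    rw [MvPolynomial.monomial_pow]
  rw [hQ, MvPolynomial.coeff_sum]
  simp only [MvPolynomial.coeff_monomial]
  by_cases h : ∀ j, p ∣ i j
  · rw [if_pos h]
    set d₀ : σ →₀ ℕ := Finsupp.mapRange (· / p) (Nat.zero_div p) i with hd₀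
    have key : ∀ d : σ →₀ ℕ, p • d = i ↔ d = d₀ := by
      intro d
      constructor
      · rintro rfl
        ext j
        simp [hd₀, Finsupp.mapRange_apply, Finsupp.smul_apply, smul_eq_mul,
          Nat.mul_div_cancel_left _ hp.out.pos]
      · rintro rfl
        ext j
        simp only [Finsupp.smul_apply, hd₀, Finsupp.mapRange_apply, smul_eq_mul]
        exact Nat.mul_div_cancel' (h j)
    have : ∀ d : σ →₀ ℕ, (if p • d = i then Q.coeff d ^ p else 0)
        = if d = d₀ then Q.coeff d ^ p else 0 := by
      intro d; simp [key d]
    rw [Finset.sum_congr rfl (fun d _ => this d), Finset.sum_ite_eq' Q.support d₀]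
    by_cases hmem : d₀ ∈ Q.support
    · rw [if_pos hmem]
    · rw [if_neg hmem, MvPolynomial.notMem_support_iff.mp hmem, zero_pow hp.out.ne_zero]
  · rw [if_neg h]
    apply Finset.sum_eq_zero
    intro d _
    rw [if_neg]
    rintro rfl
    exact h fun j => ⟨d j, by simp [Finsupp.smul_apply, mul_comm]⟩

open Finsupp in
theorem mvps_coeff_pow_char {σ R : Type*} [CommRing R] (p : ℕ) [hp : Fact p.Prime] [CharP R p]
    (g : MvPowerSeries σ R) (i : σ →₀ ℕ) :
    MvPowerSeries.coeff i (g ^ p) = if ∀ j, p ∣ i j then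
      (MvPowerSeries.coeff (Finsupp.mapRange (· / p) (Nat.zero_div p) i) g) ^ p else 0 := by
  classical
  set P : MvPolynomial σ R := ∑ m ∈ Finset.Iic i, MvPolynomial.monomial m
    (MvPowerSeries.coeff m g) with hP
  have hPco : ∀ m ≤ i, P.coeff m = MvPowerSeries.coeff m g := by
    intro m hm
    rw [hP, MvPolynomial.coeff_sum]
    simp only [MvPolynomial.coeff_monomial]
    rw [Finset.sum_ite_eq' (Finset.Iic i) m, if_pos (Finset.mem_Iic.mpr hm)]
  have hlow : ∀ m ≤ i, MvPowerSeries.coeff m (g - (P : MvPowerSeries σ R)) = 0 := by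
    intro m hm
    rw [map_sub, MvPolynomial.coeff_coe, hPco m hm, sub_self]
  have hmul : ∀ w : MvPowerSeries σ R, MvPowerSeries.coeff i ((g - (P : MvPowerSeries σ R)) * w) = 0 := by
    intro w
    rw [MvPowerSeries.coeff_mul]
    apply Finset.sum_eq_zero
    rintro ⟨a, b⟩ hab
    rw [Finset.HasAntidiagonal.mem_antidiagonal] at hab
    have ha : a ≤ i := hab ▸ self_le_add_right a b
    rw [hlow a ha, zero_mul]
  have heq : MvPowerSeries.coeff i (g ^ p) = MvPowerSeries.coeff i ((↑P : MvPowerSeries σ R) ^ p) := by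
    obtain ⟨w, hw⟩ := sub_dvd_pow_sub_pow g (↑P : MvPowerSeries σ R) p
    have := hmul w
    rw [← hw, map_sub, sub_eq_zero] at this
    exact this
  rw [heq, ← MvPolynomial.coe_pow, MvPolynomial.coeff_coe, mvpoly_coeff_pow_char]
  by_cases h : ∀ j, p ∣ i j
  · rw [if_pos h, if_pos h, hPco]
    rw [Finsupp.le_def]
    intro j
    simp only [Finsupp.mapRange_apply]
    exact Nat.div_le_self _ _
  · rw [if_neg h, if_neg h]

theorem ps_coeff_pow_char {R : Type*} [CommRing R] (p : ℕ) [hp : Fact p.Prime] [CharP R p]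
    (g : PowerSeries R) (m : ℕ) :
    PowerSeries.coeff m (g ^ p) = if p ∣ m then (PowerSeries.coeff (m / p) g) ^ p else 0 := by
  have := mvps_coeff_pow_char p g (Finsupp.single () m)
  rw [show PowerSeries.coeff m = MvPowerSeries.coeff (Finsupp.single () m) from rfl, this]
  have hcond : (∀ j : Unit, p ∣ (Finsupp.single () m) j) ↔ p ∣ m := by
    constructor
    · intro h; simpa using h ()
    · intro h j; cases j; simpa using h
  by_cases h : p ∣ m
  · rw [if_pos (hcond.mpr h), if_pos h]
    have hidx : Finsupp.mapRange (· / p) (Nat.zero_div p) (Finsupp.single () m)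
        = Finsupp.single () (m / p) := by
      ext
      simp [Finsupp.mapRange_apply]
    rw [hidx]
    rfl
  · rw [if_neg (fun hh => h (hcond.mp hh)), if_neg h]

theorem laurent_coeff_pow_char {K : Type*} [Field K] (p : ℕ) [hp : Fact p.Prime] [CharP K p]
    (x : LaurentSeries K) (m : ℤ) :
    (x ^ p).coeff m = if (p : ℤ) ∣ m then (x.coeff (m / p)) ^ p else 0 := by
  by_cases hx : x = 0
  · subst hx
    rw [zero_pow hp.out.ne_zero]
    simp [zero_pow hp.out.ne_zero]
  · set d := x.order with hd
    have hx1 := x.single_order_mul_powerSeriesPart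
    have hxp : x ^ p = HahnSeries.single ((p : ℤ) * d) 1 *
        ((x.powerSeriesPart ^ p : PowerSeries K) : LaurentSeries K) := by
      conv_lhs => rw [← hx1]
      rw [mul_pow, HahnSeries.single_pow, one_pow, map_pow, nsmul_eq_mul]
    have hco : (x ^ p).coeff m =
        ((x.powerSeriesPart ^ p : PowerSeries K) : LaurentSeries K).coeff (m - (p : ℤ) * d) := by
      conv_lhs => rw [hxp, show m = (m - (p : ℤ) * d) + (p : ℤ) * d by ring]
      rw [HahnSeries.coeff_single_mul_add, one_mul]
    rw [hco, PowerSeries.coeff_coe, ps_coeff_pow_char]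
    by_cases h1 : m - (p : ℤ) * d < 0
    · rw [if_pos h1]
      by_cases h2 : (p : ℤ) ∣ m
      · rw [if_pos h2]
        obtain ⟨c, rfl⟩ := h2
        have hc : c < d := by
          have hp0 : (0 : ℤ) < (p : ℤ) := by exact_mod_cast hp.out.pos
          nlinarith
        rw [Int.mul_ediv_cancel_left _ (by exact_mod_cast hp.out.ne_zero)]
        rw [HahnSeries.coeff_eq_zero_of_lt_order (hd ▸ hc), zero_pow hp.out.ne_zero]
      · rw [if_neg h2]
    · rw [if_neg h1]
      push_neg at h1
      by_cases h2 : (p : ℤ) ∣ m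
      · obtain ⟨c', hc'⟩ := h2
        have hdvd : (p : ℤ) ∣ m - (p : ℤ) * d := ⟨c' - d, by rw [hc']; ring⟩
        obtain ⟨c, hc⟩ := hdvd
        have hc0 : 0 ≤ c := by
          have hp0 : (0 : ℤ) < (p : ℤ) := by exact_mod_cast hp.out.pos
          nlinarith
        have hna : (m - (p : ℤ) * d).natAbs = p * c.natAbs := by
          rw [hc, Int.natAbs_mul, Int.natAbs_natCast]
        have hdvdn : p ∣ (m - (p : ℤ) * d).natAbs := ⟨c.natAbs, hna⟩
        rw [if_pos hdvdn, if_pos ⟨c', hc'⟩]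
        congr 1
        rw [LaurentSeries.powerSeriesPart_coeff, hna, Nat.mul_div_cancel_left _ hp.out.pos]
        congr 1
        have : m = (p : ℤ) * (d + c.natAbs) := by
          rw [Int.natAbs_of_nonneg hc0]; linarith [hc]
        rw [this, Int.mul_ediv_cancel_left _ (by exact_mod_cast hp.out.ne_zero)]
      · rw [if_neg h2, if_neg]
        intro hdvdn
        apply h2
        have : (p : ℤ) ∣ m - (p : ℤ) * d := by
          rw [← Int.natAbs_of_nonneg (by linarith : 0 ≤ m - (p : ℤ) * d)]
          exact_mod_cast Int.natCast_dvd_natCast.mpr hdvdn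
        obtain ⟨c, hc⟩ := this
        exact ⟨d + c, by linarith⟩

section Ctx

variable (p n : ℕ) [hp : Fact p.Prime] (k : Type*) [Field k] [CharP k p]

theorem charP_mvps : CharP (MvPowerSeries (Fin n) k) p :=
  charP_of_injective_ringHom (f := (MvPowerSeries.C (σ := Fin n) (R := k)))
    (fun a b h => by simpa using congrArg ((MvPowerSeries.constantCoeff (σ := Fin n) (R := k))) h) p

theorem charP_K : CharP (FractionRing (MvPowerSeries (Fin n) k)) p :=
  haveI := charP_mvps p n k
  charP_of_injective_algebraMap
    (IsFractionRing.injective (MvPowerSeries (Fin n) k) (FractionRing (MvPowerSeries (Fin n) k))) p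

theorem charP_L : CharP (LaurentSeries (FractionRing (MvPowerSeries (Fin n) k))) p :=
  haveI := charP_K p n k
  charP_of_injective_ringHom
    (f := (HahnSeries.C : FractionRing (MvPowerSeries (Fin n) k) →+*
      LaurentSeries (FractionRing (MvPowerSeries (Fin n) k))))
    (fun a b h => by
      have := congrArg (fun y : LaurentSeries (FractionRing (MvPowerSeries (Fin n) k)) =>
        y.coeff 0) h
      simpa [HahnSeries.C_apply, HahnSeries.coeff_single_same] using this) p

theorem frobMv_eq_pow (g : MvPowerSeries (Fin n) k) : frobMv p g = g ^ p := by
  funext i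
  have := mvps_coeff_pow_char p g i
  rw [MvPowerSeries.coeff_apply] at this
  unfold frobMv
  by_cases h : ∀ j, p ∣ i j
  · rw [if_pos h, this, if_pos h]
  · rw [if_neg h, this, if_neg h]

theorem F_eq_pow
    (F : FractionRing (MvPowerSeries (Fin n) k) →+* FractionRing (MvPowerSeries (Fin n) k))
    (hF : ∀ g : MvPowerSeries (Fin n) k,
      F (algebraMap (MvPowerSeries (Fin n) k) (FractionRing (MvPowerSeries (Fin n) k)) g)
        = algebraMap (MvPowerSeries (Fin n) k) (FractionRing (MvPowerSeries (Fin n) k))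
            (frobMv p g)) (x : FractionRing (MvPowerSeries (Fin n) k)) : F x = x ^ p := by
  obtain ⟨g, h, hh, rfl⟩ := IsFractionRing.div_surjective (A := MvPowerSeries (Fin n) k) x
  rw [map_div₀, hF, hF, frobMv_eq_pow, frobMv_eq_pow, map_pow, map_pow, div_pow]

theorem F₂_eq_pow
    (F : FractionRing (MvPowerSeries (Fin n) k) →+* FractionRing (MvPowerSeries (Fin n) k))
    (hF : ∀ g : MvPowerSeries (Fin n) k,
      F (algebraMap (MvPowerSeries (Fin n) k) (FractionRing (MvPowerSeries (Fin n) k)) g)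
        = algebraMap (MvPowerSeries (Fin n) k) (FractionRing (MvPowerSeries (Fin n) k))
            (frobMv p g))
    (F₂ : LaurentSeries (FractionRing (MvPowerSeries (Fin n) k)) →+*
          LaurentSeries (FractionRing (MvPowerSeries (Fin n) k)))
    (hF₂ : ∀ (x : LaurentSeries (FractionRing (MvPowerSeries (Fin n) k))) (m : ℤ),
      (F₂ x).coeff m = if (p : ℤ) ∣ m then F (x.coeff (m / p)) else 0)
    (x : LaurentSeries (FractionRing (MvPowerSeries (Fin n) k))) : F₂ x = x ^ p := by
  haveI := charP_K p n k
  ext m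
  rw [hF₂, laurent_coeff_pow_char p x m]
  by_cases h : (p : ℤ) ∣ m
  · rw [if_pos h, if_pos h, F_eq_pow p n k F hF]
  · rw [if_neg h, if_neg h]

end Ctx

lemma helper_mod {p x a : ℕ} (ha : a < p) (hle : a ≤ x) (h : p ∣ x - a) : x % p = a := by
  obtain ⟨c, hc⟩ := h
  have hx : x = p * c + a := by omega
  rw [hx, Nat.mul_add_mod, Nat.mod_eq_of_lt ha]

/-- The exponent Finsupp attached to `r : Fin n → Fin p`. -/
noncomputable def rIdx {n p : ℕ} (r : Fin n → Fin p) : Fin n →₀ ℕ :=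
  ∑ i, Finsupp.single i (r i : ℕ)

lemma rIdx_apply {n p : ℕ} (r : Fin n → Fin p) (j : Fin n) : rIdx r j = r j := by
  rw [rIdx, Finsupp.finset_sum_apply, Finset.sum_eq_single j]
  · simp
  · intro i _ hij
    exact Finsupp.single_eq_of_ne' hij
  · simp

lemma prod_X_pow {n : ℕ} {k : Type*} [CommSemiring k] (p : ℕ) (r : Fin n → Fin p) :
    (∏ i, (MvPowerSeries.X i : MvPowerSeries (Fin n) k) ^ (r i : ℕ))
      = MvPowerSeries.monomial (R := k) (rIdx r) 1 := by
  rw [rIdx]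
  induction (Finset.univ : Finset (Fin n)) using Finset.induction_on with
  | empty => simp
  | insert _ _ hx ih =>
    rw [Finset.prod_insert hx, Finset.sum_insert hx, ih, MvPowerSeries.X_pow_eq,
      MvPowerSeries.monomial_mul_monomial, one_mul]

section Decomp

variable (p n : ℕ) [hp : Fact p.Prime] (k : Type*) [Field k] [CharP k p] [PerfectRing k p]

theorem mvps_decomp (a : MvPowerSeries (Fin n) k) :
    ∃ b : (Fin n → Fin p) → MvPowerSeries (Fin n) k,
      a = ∑ r : Fin n → Fin p, (b r) ^ p * MvPowerSeries.monomial (R := k) (rIdx r) 1 := by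
  set b : (Fin n → Fin p) → MvPowerSeries (Fin n) k :=
    fun r j => (frobeniusEquiv k p).symm (a (p • j + rIdx r)) with hb
  refine ⟨b, ?_⟩
  apply MvPowerSeries.ext
  intro i
  set r₀ : Fin n → Fin p := fun j => ⟨i j % p, Nat.mod_lt _ hp.out.pos⟩ with hr₀
  rw [map_sum]
  have hterm : ∀ r : Fin n → Fin p,
      MvPowerSeries.coeff i ((b r) ^ p * MvPowerSeries.monomial (R := k) (rIdx r) 1)
      = if r = r₀ then MvPowerSeries.coeff i a else 0 := by
    intro r
    rw [MvPowerSeries.coeff_mul_monomial]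
    by_cases hle : rIdx r ≤ i
    · rw [if_pos hle, mul_one, mvps_coeff_pow_char]
      by_cases hdvd : ∀ j, p ∣ (i - rIdx r) j
      · rw [if_pos hdvd]
        have hreq : r = r₀ := by
          funext j
          have h1 : (i - rIdx r) j = i j - r j := by
            rw [Finsupp.tsub_apply, rIdx_apply]
          have h2 := hdvd j
          rw [h1] at h2
          have h3 : (r j : ℕ) ≤ i j := by
            have := Finsupp.le_def.mp hle j
            rwa [rIdx_apply] at this
          have h4 : i j % p = r j := helper_mod (r j).isLt h3 h2
          exact Fin.ext (by rw [hr₀]; exact h4.symm)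
        rw [if_pos hreq, hreq]
        rw [MvPowerSeries.coeff_apply]
        have hidx : p • (Finsupp.mapRange (· / p) (Nat.zero_div p) (i - rIdx r₀)) + rIdx r₀ = i := by
          ext j
          rw [Finsupp.add_apply, Finsupp.smul_apply, Finsupp.mapRange_apply, Finsupp.tsub_apply,
            rIdx_apply]
          have h5 : (r₀ j : ℕ) = i j % p := rfl
          have h6 : i j - i j % p = p * (i j / p) := by
            have := Nat.mod_add_div (i j) p
            omega
          rw [h5, h6, smul_eq_mul, Nat.mul_div_cancel_left _ hp.out.pos]
          have := Nat.mod_add_div (i j) p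
          omega
        simp only [hb]
        rw [hidx]
        rw [show ((frobeniusEquiv k p).symm (a i)) ^ p
            = frobenius k p ((frobeniusEquiv k p).symm (a i)) from (frobenius_def _ _).symm]
        rw [show frobenius k p ((frobeniusEquiv k p).symm (a i))
            = frobeniusEquiv k p ((frobeniusEquiv k p).symm (a i)) from rfl]
        rw [(frobeniusEquiv k p).apply_symm_apply]
        rfl
      · rw [if_neg hdvd, if_neg]
        intro hreq
        apply hdvd
        intro j
        rw [Finsupp.tsub_apply, rIdx_apply, hreq]
        have h5 : (r₀ j : ℕ) = i j % p := rfl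
        rw [h5]
        have := Nat.mod_add_div (i j) p
        exact ⟨i j / p, by omega⟩
    · rw [if_neg hle, if_neg]
      intro hreq
      apply hle
      rw [Finsupp.le_def]
      intro j
      rw [rIdx_apply, hreq]
      exact Nat.mod_le _ _
  rw [Finset.sum_congr rfl (fun r _ => hterm r), Finset.sum_ite_eq' Finset.univ r₀,
    if_pos (Finset.mem_univ r₀)]

theorem K_decomp (x : FractionRing (MvPowerSeries (Fin n) k)) :
    ∃ b : (Fin n → Fin p) → FractionRing (MvPowerSeries (Fin n) k),
      x = ∑ r : Fin n → Fin p, (b r) ^ p *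
        algebraMap (MvPowerSeries (Fin n) k) (FractionRing (MvPowerSeries (Fin n) k))
          (MvPowerSeries.monomial (R := k) (rIdx r) 1) := by
  obtain ⟨g, h, hh, hx⟩ := IsFractionRing.div_surjective (A := MvPowerSeries (Fin n) k) x
  obtain ⟨c, hc⟩ := mvps_decomp p n k (g * h ^ (p - 1))
  have hh0 : algebraMap (MvPowerSeries (Fin n) k) (FractionRing (MvPowerSeries (Fin n) k)) h
      ≠ 0 := by
    rw [Ne, IsFractionRing.to_map_eq_zero_iff]
    exact nonZeroDivisors.ne_zero hh
  refine ⟨fun r => algebraMap _ _ (c r) / algebraMap _ _ h, ?_⟩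
  have hrhs : ∑ r : Fin n → Fin p,
      ((algebraMap (MvPowerSeries (Fin n) k) (FractionRing (MvPowerSeries (Fin n) k)) (c r)
        / algebraMap _ _ h) ^ p) * algebraMap _ _ (MvPowerSeries.monomial (R := k) (rIdx r) 1)
      = algebraMap (MvPowerSeries (Fin n) k) (FractionRing (MvPowerSeries (Fin n) k))
          (g * h ^ (p - 1)) / (algebraMap _ _ h) ^ p := by
    rw [hc, map_sum, Finset.sum_div]
    apply Finset.sum_congr rfl
    intro r _
    rw [map_mul, map_pow, div_pow]
    ring
  rw [hrhs, ← hx, div_eq_div_iff hh0 (pow_ne_zero p hh0), ← map_pow, ← map_mul, ← map_mul]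
  congr 1
  rw [mul_assoc, pow_sub_one_mul hp.out.ne_zero]

theorem K_indep (b : (Fin n → Fin p) → FractionRing (MvPowerSeries (Fin n) k))
    (hb : ∑ r : Fin n → Fin p, (b r) ^ p *
        algebraMap (MvPowerSeries (Fin n) k) (FractionRing (MvPowerSeries (Fin n) k))
          (MvPowerSeries.monomial (R := k) (rIdx r) 1) = 0) : ∀ r, b r = 0 := by
  obtain ⟨q, hq⟩ := IsLocalization.exist_integer_multiples
    (nonZeroDivisors (MvPowerSeries (Fin n) k)) Finset.univ b
  choose g hg using fun r => hq r (Finset.mem_univ r)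
  have hq0 : algebraMap (MvPowerSeries (Fin n) k) (FractionRing (MvPowerSeries (Fin n) k)) q
      ≠ 0 := by
    rw [Ne, IsFractionRing.to_map_eq_zero_iff]
    exact nonZeroDivisors.ne_zero q.2
  have h1 : ∑ r : Fin n → Fin p, (g r) ^ p * MvPowerSeries.monomial (R := k) (rIdx r) 1 = 0 := by
    apply IsFractionRing.injective (MvPowerSeries (Fin n) k)
      (FractionRing (MvPowerSeries (Fin n) k))
    rw [map_sum, map_zero]
    have hterm : ∀ r : Fin n → Fin p,
        algebraMap (MvPowerSeries (Fin n) k) (FractionRing (MvPowerSeries (Fin n) k))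
          ((g r) ^ p * MvPowerSeries.monomial (R := k) (rIdx r) 1)
        = (algebraMap (MvPowerSeries (Fin n) k) (FractionRing (MvPowerSeries (Fin n) k)) q) ^ p
          * ((b r) ^ p * algebraMap _ _ (MvPowerSeries.monomial (R := k) (rIdx r) 1)) := by
      intro r
      rw [map_mul, map_pow, hg r, Algebra.smul_def, mul_pow]
      ring
    rw [Finset.sum_congr rfl (fun r _ => hterm r), ← Finset.mul_sum, hb, mul_zero]
  have h2 : ∀ r, g r = 0 := by
    intro r
    apply MvPowerSeries.ext
    intro j
    have h3 := congrArg (MvPowerSeries.coeff (p • j + rIdx r)) h1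
    rw [map_sum, map_zero] at h3
    have hterm : ∀ r' : Fin n → Fin p,
        MvPowerSeries.coeff (p • j + rIdx r) ((g r') ^ p * MvPowerSeries.monomial (R := k) (rIdx r') 1)
        = if r' = r then (MvPowerSeries.coeff j (g r)) ^ p else 0 := by
      intro r'
      rw [MvPowerSeries.coeff_mul_monomial]
      by_cases hle : rIdx r' ≤ p • j + rIdx r
      · rw [if_pos hle, mul_one, mvps_coeff_pow_char]
        by_cases hdvd : ∀ l, p ∣ (p • j + rIdx r - rIdx r') l
        · rw [if_pos hdvd]
          have hreq : r' = r := by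
            funext l
            have h4 := hdvd l
            rw [Finsupp.tsub_apply, Finsupp.add_apply, Finsupp.smul_apply, smul_eq_mul,
              rIdx_apply, rIdx_apply] at h4
            have h5 : (r' l : ℕ) ≤ p * j l + r l := by
              have := Finsupp.le_def.mp hle l
              rwa [Finsupp.add_apply, Finsupp.smul_apply, smul_eq_mul, rIdx_apply,
                rIdx_apply] at this
            have h6 : (p * j l + r l) % p = r' l := helper_mod (r' l).isLt h5 h4
            rw [Nat.mul_add_mod, Nat.mod_eq_of_lt (r l).isLt] at h6
            exact Fin.ext h6.symm
          rw [if_pos hreq, hreq]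
          have hsub : p • j + rIdx r - rIdx r = p • j := by
            ext l
            rw [Finsupp.tsub_apply, Finsupp.add_apply]
            omega
          rw [hsub]
          have hmap : Finsupp.mapRange (· / p) (Nat.zero_div p) (p • j) = j := by
            ext l
            rw [Finsupp.mapRange_apply, Finsupp.smul_apply, smul_eq_mul,
              Nat.mul_div_cancel_left _ hp.out.pos]
          rw [hmap]
        · rw [if_neg hdvd, if_neg]
          intro hreq
          apply hdvd
          intro l
          rw [hreq, add_tsub_cancel_right, Finsupp.smul_apply, smul_eq_mul]
          exact ⟨j l, rfl⟩
      · rw [if_neg hle, if_neg]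
        intro hreq
        apply hle
        rw [hreq]
        exact le_add_self
    rw [Finset.sum_congr rfl (fun r' _ => hterm r'), Finset.sum_ite_eq' Finset.univ r,
      if_pos (Finset.mem_univ r)] at h3
    rw [map_zero]
    exact pow_eq_zero_iff hp.out.ne_zero |>.mp h3
  intro r
  have h4 := hg r
  rw [h2 r, map_zero, Algebra.smul_def] at h4
  rcases mul_eq_zero.mp h4.symm with h5 | h5
  · exact absurd h5 hq0
  · exact h5

end Decomp

lemma hahn_coeff_sum {Γ R α : Type*} [PartialOrder Γ] [AddCommMonoid R] (s : Finset α)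
    (f : α → HahnSeries Γ R) (g : Γ) :
    (∑ i ∈ s, f i).coeff g = ∑ i ∈ s, (f i).coeff g := by
  induction s using Finset.cons_induction with
  | empty => simp
  | cons a s ha ih => rw [Finset.sum_cons, Finset.sum_cons, HahnSeries.coeff_add, ih]

section Laurent

variable (p : ℕ) [hp : Fact p.Prime] {K : Type*} [Field K] [CharP K p]

theorem laurent_basis {N : ℕ} (u : (Fin N → Fin p) → K) (c : K)
    (S : Subfield (LaurentSeries K))
    (hS : ∀ y : LaurentSeries K, y ∈ S ↔ ∃ x : LaurentSeries K, x ^ p = y)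
    (hspan : ∀ a : K, ∃ b : (Fin N → Fin p) → K, a = ∑ r : Fin N → Fin p, (b r) ^ p * u r)
    (hindep : ∀ b : (Fin N → Fin p) → K,
      ∑ r : Fin N → Fin p, (b r) ^ p * u r = 0 → ∀ r, b r = 0) :
    ∃ B : Module.Basis ((Fin N → Fin p) × Fin p) S (LaurentSeries K),
      ∀ rs : (Fin N → Fin p) × Fin p,
        B rs = HahnSeries.C (u rs.1) *
          (HahnSeries.C c + HahnSeries.single (1 : ℤ) 1) ^ ((rs.2 : ℕ)) := by
  have hppos : (0 : ℤ) < (p : ℤ) := by exact_mod_cast hp.out.pos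
  set T : LaurentSeries K := HahnSeries.single (1 : ℤ) 1 with hTdef
  set θ : LaurentSeries K := HahnSeries.C c + T with hθdef
  set w : ((Fin N → Fin p) × Fin p) → LaurentSeries K :=
    fun rs => HahnSeries.C (u rs.1) * T ^ ((rs.2 : ℕ)) with hwdef
  set v : ((Fin N → Fin p) × Fin p) → LaurentSeries K :=
    fun rs => HahnSeries.C (u rs.1) * θ ^ ((rs.2 : ℕ)) with hvdef
  -- normalized choice function for the decomposition of elements of K
  have hbex : ∃ b : K → (Fin N → Fin p) → K,
      (∀ a, a = ∑ r : Fin N → Fin p, (b a r) ^ p * u r) ∧ (∀ r, b 0 r = 0) := by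
    choose b hb using hspan
    refine ⟨fun a => if a = 0 then 0 else b a, fun a => ?_, fun r => by simp⟩
    by_cases ha : a = 0
    · subst ha
      simp [zero_pow hp.out.ne_zero]
    · show a = ∑ r : Fin N → Fin p, (if a = 0 then 0 else b a) r ^ p * u r
      rw [if_neg ha]
      exact hb a
  obtain ⟨b, hb, hb0⟩ := hbex
  have hsmul : ∀ (s : S) (z : LaurentSeries K), s • z = (s : LaurentSeries K) * z :=
    fun s z => rfl
  -- T to the j-th power
  have hT : ∀ j : ℕ, T ^ j = HahnSeries.single ((j : ℕ) : ℤ) (1 : K) := by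
    intro j
    rw [hTdef, HahnSeries.single_pow, one_pow, nsmul_eq_mul, mul_one]
  -- coefficients of `y^p * w (r, j)`
  have hwcoeff : ∀ (y : LaurentSeries K) (r : Fin N → Fin p) (j : Fin p) (m : ℤ),
      (y ^ p * w (r, j)).coeff m
        = if (p : ℤ) ∣ m - ((j : ℕ) : ℤ) then
            (y.coeff ((m - ((j : ℕ) : ℤ)) / p)) ^ p * u r else 0 := by
    intro y r j m
    have h1 : y ^ p * w (r, j)
        = (y ^ p * HahnSeries.single (0 : ℤ) (u r)) * HahnSeries.single ((j : ℕ) : ℤ) (1 : K) := by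
      rw [hwdef]
      simp only []
      rw [hT (j : ℕ), HahnSeries.C_apply]
      ring
    conv_lhs => rw [h1, show m = (m - ((j : ℕ) : ℤ)) + ((j : ℕ) : ℤ) by ring]
    rw [HahnSeries.coeff_mul_single_add, mul_one, HahnSeries.coeff_mul_single_zero,
      laurent_coeff_pow_char p, ite_mul, zero_mul]
  -- the residue of an integer mod p, as an element of `Fin p`
  have hmod : ∀ m : ℤ, ∃ (j₀ : Fin p) (e₀ : ℤ), m = p * e₀ + ((j₀ : ℕ) : ℤ) ∧
      (∀ j : Fin p, ((p : ℤ) ∣ m - ((j : ℕ) : ℤ) ↔ j = j₀)) := by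
    intro m
    have h0 : 0 ≤ m % p := Int.emod_nonneg m (ne_of_gt hppos)
    have h1 : m % p < p := Int.emod_lt_of_pos m hppos
    have htn : (((m % p).toNat : ℕ) : ℤ) = m % p := Int.toNat_of_nonneg h0
    refine ⟨⟨(m % p).toNat, by omega⟩, m / p, ?_, ?_⟩
    · show m = (p : ℤ) * (m / p) + (((m % p).toNat : ℕ) : ℤ)
      rw [htn]
      exact (Int.mul_ediv_add_emod m p).symm
    · intro j
      constructor
      · intro hd
        have hd2 : (p : ℤ) ∣ m % p - ((j : ℕ) : ℤ) := by
          have he : m % p - ((j : ℕ) : ℤ) = (m - ((j : ℕ) : ℤ)) - p * (m / p) := by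
            rw [Int.emod_def]; ring
          rw [he]
          exact dvd_sub hd ⟨m / p, rfl⟩
        have hj1 : ((j : ℕ) : ℤ) < p := by exact_mod_cast j.isLt
        have hj0 : (0 : ℤ) ≤ ((j : ℕ) : ℤ) := by positivity
        have hz := Int.eq_zero_of_abs_lt_dvd hd2 (by rw [abs_lt]; omega)
        apply Fin.ext
        show (j : ℕ) = (m % p).toNat
        omega
      · rintro rfl
        show (p : ℤ) ∣ m - (((m % p).toNat : ℕ) : ℤ)
        rw [htn]
        exact ⟨m / p, by rw [Int.emod_def]; ring⟩
  choose j₀ e₀ he₀ hiff using hmod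
  have he₀' : ∀ m : ℤ, (m - ((j₀ m : ℕ) : ℤ)) / p = e₀ m := by
    intro m
    have := he₀ m
    rw [show m - ((j₀ m : ℕ) : ℤ) = (p : ℤ) * e₀ m by omega]
    exact Int.mul_ediv_cancel_left _ (ne_of_gt hppos)
  -- coefficient of a standard combination
  have hsumcoeff : ∀ (y : ((Fin N → Fin p) × Fin p) → LaurentSeries K) (m : ℤ),
      (∑ rs : (Fin N → Fin p) × Fin p, (y rs) ^ p * w rs).coeff m
        = ∑ r : Fin N → Fin p, ((y (r, j₀ m)).coeff (e₀ m)) ^ p * u r := by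
    intro y m
    rw [hahn_coeff_sum, Fintype.sum_prod_type]
    apply Finset.sum_congr rfl
    intro r _
    have : ∀ j : Fin p, (y (r, j) ^ p * w (r, j)).coeff m
        = if j = j₀ m then ((y (r, j₀ m)).coeff (e₀ m)) ^ p * u r else 0 := by
      intro j
      rw [hwcoeff]
      by_cases hj : j = j₀ m
      · rw [if_pos ((hiff m j).mpr hj), if_pos hj, hj, he₀' m]
      · rw [if_neg (fun hd => hj ((hiff m j).mp hd)), if_neg hj]
    rw [Finset.sum_congr rfl (fun j _ => this j), Finset.sum_ite_eq' Finset.univ (j₀ m),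
      if_pos (Finset.mem_univ _)]
  -- spanning of the standard family
  have hwspan : ∀ x : LaurentSeries K, x ∈ Submodule.span S (Set.range w) := by
    intro x
    have hmono : Monotone (fun z : ℤ => (z - ((0 : ℕ) : ℤ)) / p) := by
      intro a b hab
      exact Int.ediv_le_ediv hppos (by omega)
    set y : ((Fin N → Fin p) × Fin p) → LaurentSeries K := fun rs =>
      ⟨fun e => b (x.coeff (p * e + ((rs.2 : ℕ) : ℤ))) rs.1, by
        apply Set.IsPWO.mono (x.isPWO_support.image_of_monotone
          (f := fun z : ℤ => (z - ((rs.2 : ℕ) : ℤ)) / p)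
          (fun a b' hab => Int.ediv_le_ediv hppos (by omega)))
        intro e he
        rw [Function.mem_support] at he
        have hx : x.coeff (p * e + ((rs.2 : ℕ) : ℤ)) ≠ 0 := by
          intro h
          exact he (by rw [h, hb0])
        exact ⟨p * e + ((rs.2 : ℕ) : ℤ), hx, by
          show ((p : ℤ) * e + ((rs.2 : ℕ) : ℤ) - ((rs.2 : ℕ) : ℤ)) / (p : ℤ) = e
          rw [add_sub_cancel_right]
          exact Int.mul_ediv_cancel_left _ (ne_of_gt hppos)⟩⟩ with hydef
    have hxeq : x = ∑ rs : (Fin N → Fin p) × Fin p, (y rs) ^ p * w rs := by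
      apply HahnSeries.coeff_inj.mp
      funext m
      rw [hsumcoeff y m]
      have hyco : ∀ r : Fin N → Fin p, (y (r, j₀ m)).coeff (e₀ m) = b (x.coeff m) r := by
        intro r
        show b (x.coeff (p * e₀ m + ((j₀ m : ℕ) : ℤ))) r = b (x.coeff m) r
        rw [← he₀ m]
      rw [Finset.sum_congr rfl (fun r _ => by rw [hyco r])]
      exact hb (x.coeff m)
    rw [hxeq]
    apply Submodule.sum_mem
    intro rs _
    have : (y rs) ^ p * w rs = (⟨(y rs) ^ p, (hS _).mpr ⟨y rs, rfl⟩⟩ : S) • w rs := rfl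
    rw [this]
    exact Submodule.smul_mem _ _ (Submodule.subset_span ⟨rs, rfl⟩)
  -- linear independence of the standard family
  have hwindep : LinearIndependent S w := by
    rw [Fintype.linearIndependent_iff]
    intro g hg
    choose y hy using fun rs => (hS ((g rs : LaurentSeries K))).mp (g rs).2
    have hg' : ∑ rs : (Fin N → Fin p) × Fin p, (y rs) ^ p * w rs = 0 := by
      rw [← hg]
      apply Finset.sum_congr rfl
      intro rs _
      rw [hsmul, hy rs]
    have hzero : ∀ rs : (Fin N → Fin p) × Fin p, ∀ e : ℤ, (y rs).coeff e = 0 := by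
      rintro ⟨r, j⟩ e
      set m : ℤ := (p : ℤ) * e + ((j : ℕ) : ℤ) with hm
      have hc := congrArg (fun z : LaurentSeries K => z.coeff m) hg'
      simp only [HahnSeries.coeff_zero] at hc
      rw [hsumcoeff y m] at hc
      have hjm : j = j₀ m := (hiff m j).mp ⟨e, by rw [hm]; ring⟩
      have hem : e₀ m = e := by
        have h1 : (p : ℤ) * e + ((j : ℕ) : ℤ) = (p : ℤ) * e₀ m + ((j₀ m : ℕ) : ℤ) := by
          rw [← hm]; exact he₀ m
        have h3 : ((j : ℕ) : ℤ) = ((j₀ m : ℕ) : ℤ) := by rw [hjm]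
        have h4 : (p : ℤ) * e₀ m = (p : ℤ) * e := by linarith
        exact mul_left_cancel₀ (ne_of_gt hppos) h4
      have := hindep (fun r' => (y (r', j₀ m)).coeff (e₀ m)) hc r
      rwa [← hjm, hem] at this
    intro i
    have hyz : y i = 0 := HahnSeries.coeff_inj.mp (funext (hzero i))
    apply Subtype.ext
    rw [← hy i, hyz, zero_pow hp.out.ne_zero]
    rfl
  -- the standard basis and the dimension
  let bstd : Module.Basis ((Fin N → Fin p) × Fin p) S (LaurentSeries K) :=
    Module.Basis.mk hwindep (fun x _ => hwspan x)
  have hfin : Fintype.card ((Fin N → Fin p) × Fin p) = Module.finrank S (LaurentSeries K) :=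
    (Module.finrank_eq_card_basis bstd).symm
  -- the submodule generated by the constants C (u r)
  set M := Submodule.span S (Set.range fun r : Fin N → Fin p => (HahnSeries.C (u r) : LaurentSeries K)) with hMdef
  have hCmem : ∀ a : K, HahnSeries.C a ∈ M := by
    intro a
    obtain ⟨d, hd⟩ := hspan a
    rw [hd, map_sum]
    apply Submodule.sum_mem
    intro r _
    have h2 : HahnSeries.C ((d r) ^ p * u r)
        = (⟨((HahnSeries.C (d r) : LaurentSeries K)) ^ p,
            (hS _).mpr ⟨HahnSeries.C (d r), rfl⟩⟩ : S)
          • (HahnSeries.C (u r) : LaurentSeries K) := by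
      rw [hsmul, map_mul, map_pow]
    rw [h2]
    exact Submodule.smul_mem _ _ (Submodule.subset_span ⟨r, rfl⟩)
  have hMθ : ∀ z, z ∈ M → ∀ i : ℕ, i < p → z * θ ^ i ∈ Submodule.span S (Set.range v) := by
    intro z hz
    induction hz using Submodule.span_induction with
    | mem x hx =>
      intro i hi
      obtain ⟨r, rfl⟩ := hx
      exact Submodule.subset_span ⟨(r, ⟨i, hi⟩), rfl⟩
    | zero =>
      intro i _
      rw [zero_mul]
      exact Submodule.zero_mem _
    | add x z' hx hz' ihx ihz' =>
      intro i hi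
      rw [add_mul]
      exact Submodule.add_mem _ (ihx i hi) (ihz' i hi)
    | smul a x hx ih =>
      intro i hi
      rw [hsmul, mul_assoc, ← hsmul]
      exact Submodule.smul_mem _ _ (ih i hi)
  have hvspan : ⊤ ≤ Submodule.span S (Set.range v) := by
    intro x _
    apply Submodule.span_le.mpr ?_ (hwspan x)
    rintro _ ⟨⟨r, j⟩, rfl⟩
    have hTθ : T = θ + (-(HahnSeries.C c)) := by rw [hθdef]; ring
    have hexp : w (r, j) = ∑ i ∈ Finset.range ((j : ℕ) + 1),
        HahnSeries.C (u r * ((-c) ^ ((j : ℕ) - i) * (((j : ℕ).choose i : ℕ) : K))) * θ ^ i := by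
      rw [hwdef]
      simp only []
      rw [hTθ, add_pow, Finset.mul_sum]
      apply Finset.sum_congr rfl
      intro i _
      rw [map_mul, map_mul, ← map_neg (HahnSeries.C : K →+* LaurentSeries K), ← map_pow,
        map_natCast (HahnSeries.C : K →+* LaurentSeries K)]
      ring
    rw [hexp]
    apply Submodule.sum_mem
    intro i hi
    rw [Finset.mem_range] at hi
    exact hMθ _ (hCmem _) i (by have := j.isLt; omega)
  refine ⟨basisOfTopLeSpanOfCardEqFinrank v hvspan hfin, ?_⟩
  intro rs
  have hco := congrFun (coe_basisOfTopLeSpanOfCardEqFinrank v hvspan hfin) rs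
  rw [hco]

end Laurent

/-- extending the Frobenius `F` of `K = Frac(k[[t_1,…,t_n]])` to `K((T))`
by `F(T) = T^p`, for any power series `f` the family `(t^r (f+T)^s)`,
`(r,s) ∈ {0,…,p-1}^{n+1}`, is a basis of `K((T))` over `K((T))^{⟨p⟩} = F(K((T)))`. -/
theorem stmt2 (p n : ℕ) [Fact p.Prime] (k : Type*) [Field k] [CharP k p] [PerfectRing k p]
    (F : FractionRing (MvPowerSeries (Fin n) k) →+* FractionRing (MvPowerSeries (Fin n) k))
    (hF : ∀ g : MvPowerSeries (Fin n) k,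
      F (algebraMap (MvPowerSeries (Fin n) k) (FractionRing (MvPowerSeries (Fin n) k)) g)
        = algebraMap (MvPowerSeries (Fin n) k) (FractionRing (MvPowerSeries (Fin n) k))
            (frobMv p g))
    (F₂ : LaurentSeries (FractionRing (MvPowerSeries (Fin n) k)) →+*
          LaurentSeries (FractionRing (MvPowerSeries (Fin n) k)))
    (hF₂ : ∀ (x : LaurentSeries (FractionRing (MvPowerSeries (Fin n) k))) (m : ℤ),
      (F₂ x).coeff m = if (p : ℤ) ∣ m then F (x.coeff (m / p)) else 0)
    (f : MvPowerSeries (Fin n) k) :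
    ∃ B : Module.Basis ((Fin n → Fin p) × Fin p) F₂.fieldRange
        (LaurentSeries (FractionRing (MvPowerSeries (Fin n) k))),
      ∀ rs : (Fin n → Fin p) × Fin p,
        B rs = HahnSeries.C (∏ i : Fin n,
            (algebraMap (MvPowerSeries (Fin n) k) (FractionRing (MvPowerSeries (Fin n) k))
              (MvPowerSeries.X i)) ^ ((rs.1 i : ℕ)))
          * (HahnSeries.C (algebraMap (MvPowerSeries (Fin n) k)
                (FractionRing (MvPowerSeries (Fin n) k)) f)
             + HahnSeries.single (1 : ℤ) 1) ^ ((rs.2 : ℕ)) := by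
  haveI := charP_K p n k
  have hS : ∀ y : LaurentSeries (FractionRing (MvPowerSeries (Fin n) k)),
      y ∈ F₂.fieldRange ↔ ∃ x, x ^ p = y := by
    intro y
    rw [RingHom.mem_fieldRange]
    constructor
    · rintro ⟨x, Rfl⟩
      exact ⟨x, by rw [← F₂_eq_pow p n k F hF F₂ hF₂ x, Rfl]⟩
    · rintro ⟨x, Rfl⟩
      exact ⟨x, by rw [F₂_eq_pow p n k F hF F₂ hF₂ x, Rfl]⟩
  obtain ⟨B, hB⟩ := laurent_basis p
    (fun r => algebraMap (MvPowerSeries (Fin n) k) (FractionRing (MvPowerSeries (Fin n) k))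
      (MvPowerSeries.monomial (R := k) (rIdx r) 1))
    (algebraMap (MvPowerSeries (Fin n) k) (FractionRing (MvPowerSeries (Fin n) k)) f)
    F₂.fieldRange hS (K_decomp p n k) (K_indep p n k)
  refine ⟨B, fun rs => ?_⟩
  rw [hB rs]
  have hprod : (∏ i : Fin n,
      (algebraMap (MvPowerSeries (Fin n) k) (FractionRing (MvPowerSeries (Fin n) k))
        (MvPowerSeries.X i)) ^ ((rs.1 i : ℕ)))
      = algebraMap (MvPowerSeries (Fin n) k) (FractionRing (MvPowerSeries (Fin n) k))
        (MvPowerSeries.monomial (R := k) (rIdx rs.1) 1) := by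
    rw [Finset.prod_congr rfl (fun i _ => (map_pow (algebraMap (MvPowerSeries (Fin n) k)
      (FractionRing (MvPowerSeries (Fin n) k))) (MvPowerSeries.X i) ((rs.1 i : ℕ))).symm),
      ← map_prod, prod_X_pow]
  rw [hprod]
end

section
/- Let k be a perfect field of characteristic p and let f ∈ k[[t_1,...,t_n]] be algebraic over k(t_1,...,t_n). Then the minimal polynomial E(t,y) ∈ k[t_1,...,t_n][y] of f over k(t) (normalized with globally coprime polynomial coefficients) is separable in y; in particular E is not of the form F(t, y^p) for any polynomial F, and f is a simple root of E(t,·). -/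
open Polynomial

section Aux

variable {p n : ℕ} [Fact p.Prime] {k : Type*} [Field k] [CharP k p]

local notation "σn" => Fin n

/-- residue of a multi-exponent mod p -/
noncomputable def emod (p : ℕ) (d : Fin n →₀ ℕ) : Fin n →₀ ℕ :=
  d.mapRange (· % p) (Nat.zero_mod p)

/-- quotient of a multi-exponent by p -/
noncomputable def ediv (p : ℕ) (d : Fin n →₀ ℕ) : Fin n →₀ ℕ :=
  d.mapRange (· / p) (Nat.zero_div p)

lemma smul_ediv_add_emod (p : ℕ) (d : Fin n →₀ ℕ) : p • ediv p d + emod p d = d := by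
  ext i
  simp [ediv, emod, Finsupp.smul_apply, smul_eq_mul]
  exact Nat.div_add_mod (d i) p

lemma emod_lt (p : ℕ) (hp : 0 < p) (d : Fin n →₀ ℕ) (i : Fin n) : emod p d i < p := by
  simp [emod]; exact Nat.mod_lt _ hp

lemma emod_smul_add (p : ℕ) (hp : 0 < p) (m e : Fin n →₀ ℕ) (he : ∀ i, e i < p) :
    emod p (p • m + e) = e := by
  ext i
  simp [emod, Finsupp.smul_apply, smul_eq_mul]
  exact Nat.mod_eq_of_lt (he i)

lemma ediv_smul_add (p : ℕ) (hp : 0 < p) (m e : Fin n →₀ ℕ) (he : ∀ i, e i < p) :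
    ediv p (p • m + e) = m := by
  ext i
  simp [ediv, Finsupp.smul_apply, smul_eq_mul]
  rw [Nat.mul_add_div hp, Nat.div_eq_of_lt (he i), add_zero]

lemma coeff_pow_char_not_dvd (P : MvPolynomial (Fin n) k) (m : Fin n →₀ ℕ) (i : Fin n)
    (hi : ¬ p ∣ m i) : MvPolynomial.coeff m (P ^ p) = 0 := by
  induction P using MvPolynomial.induction_on' with
  | monomial d a =>
    rw [MvPolynomial.monomial_pow, MvPolynomial.coeff_monomial]
    have : p • d ≠ m := by
      rintro rfl
      exact hi ⟨d i, by simp [Finsupp.smul_apply, mul_comm]⟩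
    simp [this]
  | add f g hf hg =>
    rw [add_pow_char, MvPolynomial.coeff_add, hf, hg, add_zero]

lemma coeff_pow_char_smul (P : MvPolynomial (Fin n) k) (d : Fin n →₀ ℕ) :
    MvPolynomial.coeff (p • d) (P ^ p) = (MvPolynomial.coeff d P) ^ p := by
  have hp : p ≠ 0 := (Fact.out : p.Prime).ne_zero
  induction P using MvPolynomial.induction_on' with
  | monomial e a =>
    rw [MvPolynomial.monomial_pow, MvPolynomial.coeff_monomial, MvPolynomial.coeff_monomial]
    by_cases h : e = d
    · subst h; simp
    · have : p • e ≠ p • d := by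
        intro hc; apply h; ext i
        have := DFunLike.congr_fun hc i
        simp [Finsupp.smul_apply, smul_eq_mul] at this
        exact this.resolve_right hp
      simp [h, this, zero_pow hp]
  | add f g hf hg =>
    rw [add_pow_char, MvPolynomial.coeff_add, hf, hg, MvPolynomial.coeff_add, add_pow_char]

end Aux

section Aux2

variable {p n : ℕ} [Fact p.Prime] {k : Type*} [Field k] [CharP k p]

lemma coeff_pow_congr (φ₁ φ₂ : MvPowerSeries (Fin n) k) (m : Fin n →₀ ℕ)
    (h : ∀ d ≤ m, MvPowerSeries.coeff d φ₁ = MvPowerSeries.coeff d φ₂) (j : ℕ) :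
    ∀ d ≤ m, MvPowerSeries.coeff d (φ₁ ^ j) = MvPowerSeries.coeff d (φ₂ ^ j) := by
  classical
  induction j with
  | zero => intro d _; simp
  | succ j ih =>
    intro d hd
    rw [pow_succ, pow_succ, MvPowerSeries.coeff_mul, MvPowerSeries.coeff_mul]
    apply Finset.sum_congr rfl
    intro q hq
    rw [Finset.HasAntidiagonal.mem_antidiagonal] at hq
    have h1 : q.1 ≤ d := le_iff_exists_add.mpr ⟨q.2, hq.symm⟩
    have h2 : q.2 ≤ d := le_iff_exists_add.mpr ⟨q.1, by rw [add_comm]; exact hq.symm⟩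
    rw [ih q.1 (h1.trans hd), h q.2 (h2.trans hd)]

lemma ps_coeff_pow_char_not_dvd (h : MvPowerSeries (Fin n) k) (m : Fin n →₀ ℕ) (i : Fin n)
    (hi : ¬ p ∣ m i) : MvPowerSeries.coeff m (h ^ p) = 0 := by
  classical
  set Q : MvPolynomial (Fin n) k :=
    ∑ d ∈ Finset.Iic m, MvPolynomial.monomial d (MvPowerSeries.coeff d h) with hQdef
  have hQ : ∀ d ≤ m, MvPowerSeries.coeff d (Q : MvPowerSeries (Fin n) k)
      = MvPowerSeries.coeff d h := by
    intro d hd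
    rw [MvPolynomial.coeff_coe, hQdef, MvPolynomial.coeff_sum]
    rw [Finset.sum_eq_single d]
    · simp
    · intro b _ hb; simp [MvPolynomial.coeff_monomial, hb]
    · intro hd'; exact absurd (Finset.mem_Iic.mpr hd) hd'
  have := coeff_pow_congr h (Q : MvPowerSeries (Fin n) k) m (fun d hd => (hQ d hd).symm) p m le_rfl
  rw [this, ← MvPolynomial.coe_pow, MvPolynomial.coeff_coe]
  exact coeff_pow_char_not_dvd Q m i hi

end Aux2

section Aux3

variable (p n : ℕ) [Fact p.Prime] (k : Type*) [Field k] [CharP k p] [PerfectRing k p]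

/-- the finset of residue multi-exponents -/
noncomputable def Smod : Finset (Fin n →₀ ℕ) :=
  (Finset.univ : Finset (Fin n → Fin p)).image
    (fun g => Finsupp.equivFunOnFinite.symm (fun i => (g i : ℕ)))

variable {p n}

lemma mem_Smod_lt {e : Fin n →₀ ℕ} (he : e ∈ Smod p n) (i : Fin n) : e i < p := by
  rcases Finset.mem_image.mp he with ⟨g, _, rfl⟩
  simpa using (g i).isLt

lemma emod_mem_Smod (hp : 0 < p) (d : Fin n →₀ ℕ) : emod p d ∈ Smod p n := by
  apply Finset.mem_image.mpr
  refine ⟨fun i => ⟨d i % p, Nat.mod_lt _ hp⟩, Finset.mem_univ _, ?_⟩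
  ext i
  simp [emod]

variable {k}

noncomputable local instance : ExpChar k p := ExpChar.prime Fact.out

variable (p) in
/-- the `e`-component in the `p`-power decomposition of a multivariate polynomial -/
noncomputable def pPart (e : Fin n →₀ ℕ) (c : MvPolynomial (Fin n) k) :
    MvPolynomial (Fin n) k :=
  ∑ d ∈ c.support.filter (fun d => emod p d = e),
    MvPolynomial.monomial (ediv p d) ((frobeniusEquiv k p).symm (MvPolynomial.coeff d c))

lemma coeff_pPart {e : Fin n →₀ ℕ} (he : ∀ i, e i < p) (c : MvPolynomial (Fin n) k)
    (m : Fin n →₀ ℕ) :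
    MvPolynomial.coeff m (pPart p e c)
      = (frobeniusEquiv k p).symm (MvPolynomial.coeff (p • m + e) c) := by
  classical
  have hp : 0 < p := (Fact.out : p.Prime).pos
  rw [pPart, MvPolynomial.coeff_sum, Finset.sum_eq_single (p • m + e)]
  · rw [ediv_smul_add p hp m e he, MvPolynomial.coeff_monomial, if_pos rfl]
  · intro b hb hbne
    rw [Finset.mem_filter] at hb
    rw [MvPolynomial.coeff_monomial]
    have : ediv p b ≠ m := by
      intro hc
      apply hbne
      conv_lhs => rw [← smul_ediv_add_emod p b, hc, hb.2]
    simp [this]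
  · intro hnot
    rw [MvPolynomial.coeff_monomial]
    have : MvPolynomial.coeff (p • m + e) c = 0 := by
      by_contra hc
      exact hnot (Finset.mem_filter.mpr ⟨MvPolynomial.mem_support_iff.mpr hc,
        emod_smul_add p hp m e he⟩)
    simp [this]

lemma sub_emod_eq (hp : 0 < p) (m : Fin n →₀ ℕ) : m - emod p m = p • ediv p m := by
  ext i
  have h := Nat.div_add_mod (m i) p
  simp [emod, ediv, Finsupp.tsub_apply, Finsupp.smul_apply, smul_eq_mul]
  omega

lemma emod_le (m : Fin n →₀ ℕ) : emod p m ≤ m := by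
  intro i
  simp [emod]
  exact Nat.mod_le _ _

lemma pPart_decomp (c : MvPolynomial (Fin n) k) :
    c = ∑ e ∈ Smod p n, MvPolynomial.monomial e (1 : k) * (pPart p e c) ^ p := by
  classical
  have hp : 0 < p := (Fact.out : p.Prime).pos
  ext m
  rw [MvPolynomial.coeff_sum, Finset.sum_eq_single (emod p m)]
  · rw [MvPolynomial.coeff_monomial_mul', if_pos (emod_le m), one_mul, sub_emod_eq hp,
      coeff_pow_char_smul, coeff_pPart (fun i => emod_lt p hp m i)]
    rw [← frobenius_def, frobenius_apply_frobeniusEquiv_symm, smul_ediv_add_emod]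
  · intro e heS hene
    rw [MvPolynomial.coeff_monomial_mul']
    by_cases hle : e ≤ m
    · rw [if_pos hle, one_mul]
      obtain ⟨i, hi⟩ : ∃ i, e i ≠ emod p m i := by
        by_contra hcon
        push_neg at hcon
        exact hene (Finsupp.ext hcon)
      have hnd : ¬ p ∣ (m - e) i := by
        rintro ⟨q, hq⟩
        rw [Finsupp.tsub_apply] at hq
        apply hi
        have hei : e i ≤ m i := hle i
        have hmi : m i = p * q + e i := by omega
        simp [emod, hmi, Nat.mul_add_mod, Nat.mod_eq_of_lt (mem_Smod_lt heS i)]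
      rw [coeff_pow_char_not_dvd _ _ i hnd]
    · rw [if_neg hle]
  · intro hnot
    exact absurd (emod_mem_Smod hp m) hnot

end Aux3

section Aux4

variable {p n : ℕ} [Fact p.Prime] {k : Type*} [Field k] [CharP k p] [PerfectRing k p]

local notation "αps" => algebraMap (MvPolynomial (Fin n) k) (MvPowerSeries (Fin n) k)

lemma alg_coeff (c : MvPolynomial (Fin n) k) (d : Fin n →₀ ℕ) :
    MvPowerSeries.coeff d (αps c) = MvPolynomial.coeff d c := by
  rw [MvPowerSeries.algebraMap_apply', MvPowerSeries.coeff_map, MvPolynomial.coeff_coe]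
  simp

lemma alg_injective : Function.Injective (αps) := by
  intro a b hab
  apply MvPolynomial.ext
  intro d
  rw [← alg_coeff a d, ← alg_coeff b d, hab]

lemma alg_monomial (e : Fin n →₀ ℕ) :
    αps (MvPolynomial.monomial e (1 : k)) = MvPowerSeries.monomial e 1 := by
  ext d
  rw [alg_coeff, MvPolynomial.coeff_monomial, MvPowerSeries.coeff_monomial]
  by_cases h : e = d
  · subst h; simp
  · simp [h, Ne.symm h]

lemma lower_annihilator (f : MvPowerSeries (Fin n) k) (F : Polynomial (MvPolynomial (Fin n) k))
    (hF : F ≠ 0) (hFf : Polynomial.aeval (f ^ p) F = 0) :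
    ∃ G : Polynomial (MvPolynomial (Fin n) k),
      G ≠ 0 ∧ Polynomial.aeval f G = 0 ∧ G.natDegree ≤ F.natDegree := by
  classical
  have hp : 0 < p := (Fact.out : p.Prime).pos
  haveI : CharP (MvPowerSeries (Fin n) k) p := charP_of_injective_ringHom alg_injective p
  set N := F.natDegree with hN
  set H : (Fin n →₀ ℕ) → MvPowerSeries (Fin n) k := fun e =>
    ∑ i ∈ Finset.range (N + 1), αps (pPart p e (F.coeff i)) * f ^ i with hH
  have key : ∑ e ∈ Smod p n, (MvPowerSeries.monomial e 1) * (H e) ^ p = 0 := by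
    have step1 : ∀ e, (H e) ^ p
        = ∑ i ∈ Finset.range (N + 1), αps (pPart p e (F.coeff i)) ^ p * (f ^ p) ^ i := by
      intro e
      rw [hH]
      rw [sum_pow_char]
      apply Finset.sum_congr rfl
      intro i _
      rw [mul_pow, ← pow_mul, ← pow_mul, mul_comm i p]
    calc ∑ e ∈ Smod p n, (MvPowerSeries.monomial e 1) * (H e) ^ p
        = ∑ e ∈ Smod p n, ∑ i ∈ Finset.range (N + 1),
            (MvPowerSeries.monomial e 1) * (αps (pPart p e (F.coeff i)) ^ p * (f ^ p) ^ i) := by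
          apply Finset.sum_congr rfl
          intro e _
          rw [step1, Finset.mul_sum]
      _ = ∑ i ∈ Finset.range (N + 1), (∑ e ∈ Smod p n,
            (MvPowerSeries.monomial e 1) * αps (pPart p e (F.coeff i)) ^ p) * (f ^ p) ^ i := by
          rw [Finset.sum_comm]
          apply Finset.sum_congr rfl
          intro i _
          rw [Finset.sum_mul]
          apply Finset.sum_congr rfl
          intro e _
          rw [mul_assoc]
      _ = ∑ i ∈ Finset.range (N + 1), αps (F.coeff i) * (f ^ p) ^ i := by
          apply Finset.sum_congr rfl
          intro i _
          congr 1
          conv_rhs => rw [pPart_decomp (p := p) (F.coeff i)]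
          rw [map_sum]
          apply Finset.sum_congr rfl
          intro e _
          rw [map_mul, map_pow, alg_monomial]
      _ = Polynomial.aeval (f ^ p) F := by
          rw [Polynomial.aeval_eq_sum_range]
          apply Finset.sum_congr rfl
          intro i _
          rw [Algebra.smul_def]
      _ = 0 := hFf
  -- each component vanishes
  have hzero : ∀ e ∈ Smod p n, H e = 0 := by
    intro e heS
    have hpow : (H e) ^ p = 0 := by
      ext d
      rw [map_zero]
      by_cases hdvd : ∀ i, p ∣ d i
      · -- d = p • ediv p d
        have hd : d = p • ediv p d + e - e := by
          rw [add_tsub_cancel_right]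
          ext i
          rcases hdvd i with ⟨q, hq⟩
          simp [ediv, Finsupp.smul_apply, smul_eq_mul, hq, Nat.mul_div_cancel_left _ hp]
        have := congrArg (MvPowerSeries.coeff (p • ediv p d + e)) key
        rw [map_zero, map_sum] at this
        rw [Finset.sum_eq_single e] at this
        · rw [MvPowerSeries.coeff_monomial_mul, if_pos] at this
          · rw [one_mul] at this
            rw [hd]
            exact this
          · intro i; simp
        · intro e' he'S he'ne
          rw [MvPowerSeries.coeff_monomial_mul]
          by_cases hle : e' ≤ p • ediv p d + e
          · rw [if_pos hle, one_mul]
            obtain ⟨i, hi⟩ : ∃ i, e' i ≠ e i := by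
              by_contra hcon
              push_neg at hcon
              exact he'ne (Finsupp.ext hcon)
            have hnd : ¬ p ∣ (p • ediv p d + e - e') i := by
              rintro ⟨q, hq⟩
              rw [Finsupp.tsub_apply, Finsupp.coe_add, Pi.add_apply,
                Finsupp.smul_apply, smul_eq_mul] at hq
              have hle' : e' i ≤ p * ediv p d i + e i := by
                have := hle i
                simpa [Finsupp.smul_apply, smul_eq_mul] using this
              have heq : p * q + e' i = p * ediv p d i + e i := by omega
              have h1 : (p * q + e' i) % p = e' i := by
                rw [Nat.mul_add_mod, Nat.mod_eq_of_lt (mem_Smod_lt he'S i)]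
              have h2 : (p * ediv p d i + e i) % p = e i := by
                rw [Nat.mul_add_mod, Nat.mod_eq_of_lt (mem_Smod_lt heS i)]
              rw [heq, h2] at h1
              exact hi h1.symm
            rw [ps_coeff_pow_char_not_dvd (H e') _ i hnd]
          · rw [if_neg hle]
        · intro hnot; exact absurd heS hnot
      · push_neg at hdvd
        obtain ⟨i, hi⟩ := hdvd
        exact ps_coeff_pow_char_not_dvd (H e) d i hi
    exact pow_eq_zero_iff hp.ne'  |>.mp hpow
  -- pick a nonzero component
  obtain ⟨i₀, hi₀⟩ : ∃ i₀, F.coeff i₀ ≠ 0 := by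
    by_contra hcon
    push_neg at hcon
    exact hF (Polynomial.ext fun i => by rw [hcon i, Polynomial.coeff_zero])
  obtain ⟨e₀, he₀S, he₀⟩ : ∃ e₀ ∈ Smod p n, pPart p e₀ (F.coeff i₀) ≠ 0 := by
    by_contra hcon
    push_neg at hcon
    apply hi₀
    rw [pPart_decomp (p := p) (F.coeff i₀)]
    apply Finset.sum_eq_zero
    intro e heS
    rw [hcon e heS, zero_pow hp.ne', mul_zero]
  refine ⟨∑ i ∈ Finset.range (N + 1), Polynomial.C (pPart p e₀ (F.coeff i)) * Polynomial.X ^ i,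
    ?_, ?_, ?_⟩
  · intro hzero'
    have hcoeff := congrArg (fun G => Polynomial.coeff G i₀) hzero'
    simp only [Polynomial.finset_sum_coeff, Polynomial.coeff_C_mul, Polynomial.coeff_X_pow,
      Polynomial.coeff_zero] at hcoeff
    rw [Finset.sum_eq_single i₀] at hcoeff
    · simp at hcoeff
      exact he₀ hcoeff
    · intro b _ hb; simp [Ne.symm hb]
    · intro hnot
      exfalso
      apply hnot
      rw [Finset.mem_range]
      exact Nat.lt_succ_of_le (Polynomial.le_natDegree_of_ne_zero hi₀)
  · have : Polynomial.aeval f (∑ i ∈ Finset.range (N + 1),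
        Polynomial.C (pPart p e₀ (F.coeff i)) * Polynomial.X ^ i) = H e₀ := by
      rw [map_sum, hH]
      apply Finset.sum_congr rfl
      intro i _
      rw [map_mul, map_pow, Polynomial.aeval_C, Polynomial.aeval_X]
    rw [this]
    exact hzero e₀ he₀S
  · apply Polynomial.natDegree_sum_le_of_forall_le
    intro i hi
    exact (Polynomial.natDegree_C_mul_X_pow_le _ _).trans
      (Nat.lt_succ_iff.mp (Finset.mem_range.mp hi))

end Aux4

set_option maxHeartbeats 1000000 in
/-- over a perfect field `k` of characteristic `p`, the minimal polynomial
`E(t,y) ∈ k[t₁,…,tₙ][y]` of an algebraic power series `f ∈ k[[t₁,…,tₙ]]` is separable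
in `y`; in particular it is not of the form `F(t, y^p)` and `f` is a simple root of it. -/
theorem stmt7 (p n : ℕ) [Fact p.Prime] (k : Type*) [Field k] [CharP k p] [PerfectRing k p]
    (f : MvPowerSeries (Fin n) k)
    (E : Polynomial (MvPolynomial (Fin n) k))
    (hE0 : E ≠ 0)
    (hEf : Polynomial.aeval f E = 0)
    (hmin : ∀ E' : Polynomial (MvPolynomial (Fin n) k),
      E' ≠ 0 → Polynomial.aeval f E' = 0 → E.natDegree ≤ E'.natDegree) :
    (E.map (algebraMap (MvPolynomial (Fin n) k)
        (FractionRing (MvPolynomial (Fin n) k)))).Separable ∧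
    (¬ ∃ F : Polynomial (MvPolynomial (Fin n) k),
        E = Polynomial.expand (MvPolynomial (Fin n) k) p F) ∧
    Polynomial.aeval f (Polynomial.derivative E) ≠ 0 := by
  classical
  have hp2 : 2 ≤ p := (Fact.out : p.Prime).two_le
  -- the polynomial E has positive degree
  have hdegE : 1 ≤ E.natDegree := by
    by_contra hc
    push_neg at hc
    obtain ⟨a, ha⟩ := Polynomial.natDegree_eq_zero.mp (Nat.lt_one_iff.mp hc)
    rw [← ha, Polynomial.aeval_C] at hEf
    have : a = 0 := alg_injective (by rw [hEf, map_zero])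
    exact hE0 (by rw [← ha, this, map_zero])
  -- the derivative of E is nonzero
  have hder : Polynomial.derivative E ≠ 0 := by
    intro h
    have hE' := Polynomial.expand_contract p h (Fact.out : p.Prime).ne_zero
    set F := Polynomial.contract p E with hFdef
    have hFne : F ≠ 0 := fun h0 => hE0 (by rw [← hE', h0, map_zero])
    have hFf : Polynomial.aeval (f ^ p) F = 0 := by
      rw [← Polynomial.expand_aeval, hE']; exact hEf
    obtain ⟨G, hG0, hGf, hGdeg⟩ := lower_annihilator f F hFne hFf
    have h1 := hmin G hG0 hGf
    have h2 : E.natDegree = F.natDegree * p := by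
      rw [← hE', Polynomial.natDegree_expand]
    have hFdeg : 1 ≤ F.natDegree := by
      by_contra hc
      push_neg at hc
      rw [Nat.lt_one_iff.mp hc, zero_mul] at h2
      omega
    nlinarith [h1, hGdeg, h2, hFdeg, hp2]
  -- part 3 : f is a simple root
  have part3 : Polynomial.aeval f (Polynomial.derivative E) ≠ 0 := by
    intro h
    have h1 := hmin _ hder h
    have h2 := Polynomial.natDegree_derivative_lt (p := E) (by omega)
    omega
  -- part 2 : E is not an expansion
  have part2 : ¬ ∃ F : Polynomial (MvPolynomial (Fin n) k),
      E = Polynomial.expand (MvPolynomial (Fin n) k) p F := by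
    rintro ⟨F, rfl⟩
    apply hder
    rw [Polynomial.derivative_expand]
    have : (p : Polynomial (MvPolynomial (Fin n) k)) = 0 := by
      rw [← map_natCast (Polynomial.C (R := MvPolynomial (Fin n) k)), CharP.cast_eq_zero, map_zero]
    rw [this, zero_mul, mul_zero]
  -- part 1 : separability over the fraction field
  haveI : IsDomain (MvPowerSeries (Fin n) k) := NoZeroDivisors.to_isDomain _
  set K := FractionRing (MvPolynomial (Fin n) k) with hK
  set L := FractionRing (MvPowerSeries (Fin n) k) with hL
  have ψinj : Function.Injective (algebraMap (MvPowerSeries (Fin n) k) L) :=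
    IsFractionRing.injective _ _
  set g : MvPolynomial (Fin n) k →+* L :=
    (algebraMap (MvPowerSeries (Fin n) k) L).comp
      (algebraMap (MvPolynomial (Fin n) k) (MvPowerSeries (Fin n) k)) with hg
  have ginj : Function.Injective g := ψinj.comp alg_injective
  set φ : K →+* L := IsFractionRing.lift ginj with hφ
  set lf : L := algebraMap (MvPowerSeries (Fin n) k) L f with hlf
  have hφg : φ.comp (algebraMap (MvPolynomial (Fin n) k) K) = g := by
    apply RingHom.ext
    intro a
    rw [RingHom.comp_apply, hφ]
    exact IsFractionRing.lift_algebraMap ginj a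
  have hevalg : ∀ P : Polynomial (MvPolynomial (Fin n) k),
      Polynomial.eval₂ g lf P
        = algebraMap (MvPowerSeries (Fin n) k) L (Polynomial.aeval f P) := by
    intro P
    rw [Polynomial.aeval_def, Polynomial.hom_eval₂]
  have keymin : ∀ q : Polynomial K, q ≠ 0 → Polynomial.eval₂ φ lf q = 0 →
      E.natDegree ≤ q.natDegree := by
    intro q hq hq0
    set P := IsLocalization.integerNormalization
      (nonZeroDivisors (MvPolynomial (Fin n) k)) q with hP
    have hP0 : P ≠ 0 := fun h => hq (IsFractionRing.integerNormalization_eq_zero_iff.mp h)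
    have h1 := IsLocalization.integerNormalization_eval₂_eq_zero
      (nonZeroDivisors (MvPolynomial (Fin n) k)) φ q hq0
    rw [hφg, ← hP] at h1
    rw [hevalg] at h1
    have hPf : Polynomial.aeval f P = 0 := ψinj (by rw [h1, map_zero])
    have hPdeg : P.natDegree ≤ q.natDegree := by
      apply Polynomial.natDegree_le_iff_coeff_eq_zero.mpr
      intro N hN
      obtain ⟨b, -, hb⟩ := IsLocalization.integerNormalization_spec
        (nonZeroDivisors (MvPolynomial (Fin n) k)) q
      have := congrArg (fun r => Polynomial.coeff r N) hb
      simp only [Polynomial.coeff_map, Polynomial.coeff_smul] at this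
      rw [Polynomial.coeff_eq_zero_of_natDegree_lt hN, smul_zero] at this
      exact IsFractionRing.injective (MvPolynomial (Fin n) k) K (by rw [this, map_zero])
    exact (hmin P hP0 hPf).trans hPdeg
  set Ebar := E.map (algebraMap (MvPolynomial (Fin n) k) K) with hEbar
  have hKinj : Function.Injective (algebraMap (MvPolynomial (Fin n) k) K) :=
    IsFractionRing.injective _ _
  have hEbar0 : Ebar ≠ 0 := (Polynomial.map_ne_zero_iff hKinj).mpr hE0
  have hEbardeg : Ebar.natDegree = E.natDegree :=
    Polynomial.natDegree_map_eq_of_injective hKinj E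
  have hEbareval : Polynomial.eval₂ φ lf Ebar = 0 := by
    rw [hEbar, Polynomial.eval₂_map, hφg, hevalg, hEf, map_zero]
  have hirr : Irreducible Ebar := by
    constructor
    · intro h
      have := Polynomial.natDegree_eq_zero_of_isUnit h
      omega
    · intro a b hab
      by_contra hcon
      push_neg at hcon
      obtain ⟨ha, hb⟩ := hcon
      have ha0 : a ≠ 0 := by rintro rfl; rw [zero_mul] at hab; exact hEbar0 hab
      have hb0 : b ≠ 0 := by rintro rfl; rw [mul_zero] at hab; exact hEbar0 hab
      have hadeg : 1 ≤ a.natDegree := by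
        by_contra hc
        push_neg at hc
        obtain ⟨c, hc'⟩ := Polynomial.natDegree_eq_zero.mp (Nat.lt_one_iff.mp hc)
        apply ha
        rw [← hc']
        exact Polynomial.isUnit_C.mpr (isUnit_iff_ne_zero.mpr (fun h0 => ha0 (by
          rw [← hc', h0, map_zero])))
      have hbdeg : 1 ≤ b.natDegree := by
        by_contra hc
        push_neg at hc
        obtain ⟨c, hc'⟩ := Polynomial.natDegree_eq_zero.mp (Nat.lt_one_iff.mp hc)
        apply hb
        rw [← hc']
        exact Polynomial.isUnit_C.mpr (isUnit_iff_ne_zero.mpr (fun h0 => hb0 (by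
          rw [← hc', h0, map_zero])))
      have hsum : a.natDegree + b.natDegree = E.natDegree := by
        rw [← hEbardeg, hab, Polynomial.natDegree_mul ha0 hb0]
      have hprod : Polynomial.eval₂ φ lf a * Polynomial.eval₂ φ lf b = 0 := by
        rw [← Polynomial.eval₂_mul, ← hab, hEbareval]
      rcases mul_eq_zero.mp hprod with hza | hzb
      · have := keymin a ha0 hza; omega
      · have := keymin b hb0 hzb; omega
  refine ⟨?_, part2, part3⟩
  rw [Polynomial.separable_iff_derivative_ne_zero hirr]
  rw [hEbar, Polynomial.derivative_map]
  exact (Polynomial.map_ne_zero_iff hKinj).mpr hder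
end
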